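/- arXiv:2002.05353 — 2 statements merged into one kernel-verified Lean document; each statement's English description precedes it below -/
import Mathlib

section
/- Let n ≥ 1 and R = ℂ[x_0,…,x_n]. Let A = {x_i − x_j : 0 ≤ i < j ≤ n} be the braid arrangement of the symmetric group A_n. Then the singular-locus ideal J(A) equals the ideal generated by the n+1 polynomials g_s = ∏_{0≤i<j≤n, i≠s, j≠s} (x_i − x_j) for 0 ≤ s ≤ n, and this ideal also equals the ideal generated by all n×n minors of the (n+1)×n truncated Vandermonde matrix M whose (i,j)-entry is x_i^j for 0 ≤ i ≤ n and 0 ≤ j ≤ n−1. -/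
open MvPolynomial Finset

namespace BraidAux

noncomputable section
variable {N : ℕ}

abbrev R (N : ℕ) := MvPolynomial (Fin N) ℂ

/-- substitution sending `X j ↦ X i`, all other variables fixed. -/
def sb (i j : Fin N) : R N →ₐ[ℂ] R N :=
  aeval (fun u => if u = j then X i else X u)

@[simp] lemma sb_X (i j u : Fin N) :
    sb i j (X u) = if u = j then X i else X u := by
  simp [sb]

lemma sb_X_of_ne (i j u : Fin N) (h : u ≠ j) : sb i j (X u) = X u := by
  simp [h]

lemma dvd_sub_sb (i j : Fin N) (f : R N) :
    (X i - X j) ∣ f - sb i j f := by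
  induction f using MvPolynomial.induction_on with
  | C a => simp [sb]
  | add p q hp hq =>
      have : p + q - sb i j (p + q) = (p - sb i j p) + (q - sb i j q) := by
        rw [map_add]; ring
      rw [this]; exact dvd_add hp hq
  | mul_X p u hp =>
      have : p * X u - sb i j (p * X u)
          = (p - sb i j p) * X u + sb i j p * (X u - sb i j (X u)) := by
        rw [map_mul]; ring
      rw [this]
      refine dvd_add (Dvd.dvd.mul_right hp _) (Dvd.dvd.mul_left ?_ _)
      by_cases h : u = j
      · subst h; rw [sb_X, if_pos rfl]
        exact ⟨-1, by ring⟩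
      · rw [sb_X_of_ne i j u h]; simp

lemma eval_sb (a : Fin N → ℂ) (i j : Fin N) (f : R N) :
    eval a (sb i j f) = eval (Function.update a j (a i)) f := by
  have : (eval a).comp ((sb i j) : R N →+* R N) = eval (Function.update a j (a i)) := by
    apply MvPolynomial.ringHom_ext
    · intro r; simp [sb]
    · intro u
      by_cases h : u = j
      · subst h; simp
      · simp [h, Function.update_of_ne h]
  exact congrFun (congrArg DFunLike.coe this) f

lemma X_sub_ne_zero {i j : Fin N} (h : i ≠ j) : (X i - X j : R N) ≠ 0 := by
  rw [sub_ne_zero]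
  exact fun hh => h (MvPolynomial.X_injective hh)

lemma sb_eq_zero_self (i j : Fin N) (h : i ≠ j) : sb i j (X i - X j) = 0 := by
  simp [sb_X, h.symm]

lemma dvd_of_sb_eq_zero {i j : Fin N} (f : R N) (h : sb i j f = 0) :
    (X i - X j) ∣ f := by
  have := dvd_sub_sb i j f
  rwa [h, sub_zero] at this

lemma dvd_of_vanish {i j : Fin N} (hij : i ≠ j) (f : R N)
    (h : ∀ a : Fin N → ℂ, a i = a j → eval a f = 0) :
    (X i - X j) ∣ f := by
  apply dvd_of_sb_eq_zero
  apply MvPolynomial.funext (q := 0)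
  intro a
  rw [eval_sb, map_zero]
  apply h
  rw [Function.update_self, Function.update_of_ne hij]

lemma prime_X_sub {i j : Fin N} (h : i ≠ j) : Prime (X i - X j : R N) := by
  rw [← Ideal.span_singleton_prime (X_sub_ne_zero h)]
  have hker : Ideal.span {(X i - X j : R N)} = RingHom.ker ((sb i j : R N →ₐ[ℂ] R N) : R N →+* R N) := by
    apply le_antisymm
    · rw [Ideal.span_le, Set.singleton_subset_iff]
      simp only [SetLike.mem_coe, RingHom.mem_ker]
      exact sb_eq_zero_self i j h
    · intro f hf
      rw [RingHom.mem_ker] at hf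
      rw [Ideal.mem_span_singleton]
      exact dvd_of_sb_eq_zero f hf
  rw [hker]
  exact RingHom.ker_isPrime _

lemma not_dvd_pair {i j k l : Fin N} (hij : i < j) (hkl : k < l)
    (hne : (i, j) ≠ (k, l)) : ¬ (X i - X j : R N) ∣ (X k - X l) := by
  intro ⟨c, hc⟩
  have h1 : sb i j (X k - X l) = 0 := by
    rw [hc, map_mul, sb_eq_zero_self i j hij.ne, zero_mul]
  rw [map_sub, sb_X, sb_X] at h1
  have hij' : i ≠ j := hij.ne
  have hkl' : k ≠ l := hkl.ne
  by_cases h2 : k = j <;> by_cases h3 : l = j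
  · exact hkl' (h2.trans h3.symm)
  · simp only [h2, if_pos rfl, if_neg h3] at h1
    have hil : i = l := MvPolynomial.X_injective (sub_eq_zero.mp h1)
    rw [Fin.lt_def] at hij hkl
    omega
  · simp only [if_neg h2, h3, if_pos rfl] at h1
    have hki : k = i := MvPolynomial.X_injective (sub_eq_zero.mp h1)
    exact hne (by rw [hki, h3])
  · simp only [if_neg h2, if_neg h3] at h1
    exact hkl' (MvPolynomial.X_injective (sub_eq_zero.mp h1))


lemma prod_pairs_dvd (s : Finset (Fin N × Fin N)) : ∀ (hs : ∀ p ∈ s, p.1 < p.2)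
    (F : R N) (h : ∀ p ∈ s, (X p.1 - X p.2) ∣ F),
    (∏ p ∈ s, (X p.1 - X p.2)) ∣ F := by
  classical
  induction s using Finset.induction_on with
  | empty => intro hs F h; simpa using one_dvd F
  | @insert a s hns ih =>
      intro hs F h
      rw [Finset.prod_insert hns]
      obtain ⟨F₁, hF₁⟩ := h a (Finset.mem_insert_self a s)
      have hdvd : ∀ p ∈ s, (X p.1 - X p.2) ∣ F₁ := by
        intro p hp
        have hpa : p ≠ a := fun he => hns (he ▸ hp)
        have hprime := prime_X_sub (N := N) (hs p (Finset.mem_insert_of_mem hp)).ne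
        have hpdvd : (X p.1 - X p.2) ∣ (X a.1 - X a.2) * F₁ := hF₁ ▸ h p (Finset.mem_insert_of_mem hp)
        rcases hprime.2.2 _ _ hpdvd with hc | hc
        · exact absurd hc (not_dvd_pair (hs p (Finset.mem_insert_of_mem hp))
            (hs a (Finset.mem_insert_self a s))
            (fun he => hpa (Prod.ext (congrArg Prod.fst he) (congrArg Prod.snd he))))
        · exact hc
      obtain ⟨F₂, hF₂⟩ := ih (fun p hp => hs p (Finset.mem_insert_of_mem hp)) F₁ hdvd
      exact ⟨F₂, by rw [hF₁, hF₂]; ring⟩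

/-- The combinatorial core: given two distinct coincidence pairs and an index `s`,
we can find a coincidence pair avoiding `s` whose linear form lies in the span. -/
lemma core (s i j k l : Fin N) (hij : i < j) (hkl : k < l) (hne : (i,j) ≠ (k,l)) :
    ∃ σ τ : Fin N, σ < τ ∧ σ ≠ s ∧ τ ≠ s ∧ (τ:ℕ) ≤ max (j:ℕ) (l:ℕ) ∧
      (∀ a : Fin N → ℂ, a i = a j → a k = a l → a σ = a τ) ∧
      (X σ - X τ : R N) ∈ Ideal.span {X i - X j, X k - X l} := by
  classical
  by_cases h1 : s ≠ i ∧ s ≠ j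
  · exact ⟨i, j, hij, fun he => h1.1 he.symm, fun he => h1.2 he.symm,
      le_max_left _ _, fun a ha _ => ha,
      Ideal.subset_span (Set.mem_insert _ _)⟩
  by_cases h2 : s ≠ k ∧ s ≠ l
  · exact ⟨k, l, hkl, fun he => h2.1 he.symm, fun he => h2.2 he.symm,
      le_max_right _ _, fun a _ ha => ha,
      Ideal.subset_span (Set.mem_insert_of_mem _ rfl)⟩
  -- s ∈ {i,j} and s ∈ {k,l}
  push_neg at h1 h2
  set p : Fin N := if s = i then j else i with hp
  set q : Fin N := if s = k then l else k with hq
  have hps : p ≠ s := by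
    by_cases h : s = i
    · simp only [hp, if_pos h]; exact fun he => hij.ne (h.symm.trans he.symm)
    · simp only [hp, if_neg h]; exact fun he => h he.symm
  have hqs : q ≠ s := by
    by_cases h : s = k
    · simp only [hq, if_pos h]; exact fun he => hkl.ne (h.symm.trans he.symm)
    · simp only [hq, if_neg h]; exact fun he => h he.symm
  have hap : ∀ a : Fin N → ℂ, a i = a j → a p = a s := by
    intro a ha
    by_cases h : s = i
    · simp only [hp, if_pos h]; rw [← ha, h]
    · have hsj : s = j := h1 h
      simp only [hp, if_neg h]; rw [ha, hsj]
  have haq : ∀ a : Fin N → ℂ, a k = a l → a q = a s := by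
    intro a ha
    by_cases h : s = k
    · simp only [hq, if_pos h]; rw [← ha, h]
    · have hsl : s = l := h2 h
      simp only [hq, if_neg h]; rw [ha, hsl]
  have hpq : p ≠ q := by
    rw [Fin.lt_def] at hij hkl
    by_cases h : s = i <;> by_cases h' : s = k
    · have : i = k := h ▸ h'
      simp only [hp, if_pos h, hq, if_pos h']
      intro he; apply hne
      rw [Prod.mk.injEq]; exact ⟨this, he⟩
    · have hsl : s = l := h2 h'
      simp only [hp, if_pos h, hq, if_neg h']
      intro he
      have : (i:ℕ) = (l:ℕ) := by rw [← h, hsl]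
      have : (j:ℕ) = (k:ℕ) := by rw [he]
      omega
    · have hsj : s = j := h1 h
      simp only [hp, if_neg h, hq, if_pos h']
      intro he
      have : (j:ℕ) = (k:ℕ) := by rw [← hsj, h']
      have : (i:ℕ) = (l:ℕ) := by rw [he]
      omega
    · have hsj : s = j := h1 h
      have hsl : s = l := h2 h'
      simp only [hp, if_neg h, hq, if_neg h']
      intro he; apply hne
      rw [Prod.mk.injEq]
      exact ⟨he, hsj ▸ hsl ▸ rfl⟩
  have hspan : (X p - X q : R N) ∈ Ideal.span {X i - X j, X k - X l} := by
    have hmem1 : (X i - X j : R N) ∈ Ideal.span {X i - X j, X k - X l} :=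
      Ideal.subset_span (Set.mem_insert _ _)
    have hmem2 : (X k - X l : R N) ∈ Ideal.span {X i - X j, X k - X l} :=
      Ideal.subset_span (Set.mem_insert_of_mem _ rfl)
    by_cases h : s = i <;> by_cases h' : s = k
    · have hik : i = k := h ▸ h'
      have : (X p - X q : R N) = (X k - X l) - (X i - X j) := by
        rw [hp, hq, if_pos h, if_pos h', hik]; ring
      rw [this]; exact sub_mem hmem2 hmem1
    · have hsl : s = l := h2 h'
      have hil : i = l := h ▸ hsl
      have : (X p - X q : R N) = -((X i - X j) + (X k - X l)) := by
        rw [hp, hq, if_pos h, if_neg h', hil]; ring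
      rw [this]; exact neg_mem (add_mem hmem1 hmem2)
    · have hsj : s = j := h1 h
      have hjk : j = k := hsj ▸ h'
      have : (X p - X q : R N) = (X i - X j) + (X k - X l) := by
        rw [hp, hq, if_neg h, if_pos h', hjk]; ring
      rw [this]; exact add_mem hmem1 hmem2
    · have hsj : s = j := h1 h
      have hsl : s = l := h2 h'
      have hjl : j = l := hsj ▸ hsl
      have : (X p - X q : R N) = (X i - X j) - (X k - X l) := by
        rw [hp, hq, if_neg h, if_neg h', hjl]; ring
      rw [this]; exact sub_mem hmem1 hmem2
  have hpbound : (p:ℕ) ≤ max (j:ℕ) (l:ℕ) := by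
    rw [Fin.lt_def] at hij
    by_cases h : s = i
    · simp only [hp, if_pos h]; omega
    · simp only [hp, if_neg h]; omega
  have hqbound : (q:ℕ) ≤ max (j:ℕ) (l:ℕ) := by
    rw [Fin.lt_def] at hkl
    by_cases h : s = k
    · simp only [hq, if_pos h]; omega
    · simp only [hq, if_neg h]; omega
  rcases lt_or_gt_of_ne hpq with hlt | hgt
  · exact ⟨p, q, hlt, hps, hqs, hqbound,
      fun a ha hb => (hap a ha).trans (haq a hb).symm, hspan⟩
  · refine ⟨q, p, hgt, hqs, hps, hpbound,
      fun a ha hb => (haq a hb).trans (hap a ha).symm, ?_⟩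
    have : (X q - X p : R N) = -(X p - X q) := by ring
    rw [this]; exact neg_mem hspan

/-- partial products: product of `X i - X j` over pairs `i < j < m` avoiding `t`. -/
def gp (N m : ℕ) (t : Fin N) : R N :=
  ∏ p ∈ Finset.univ.filter
      (fun p : Fin N × Fin N => p.1 < p.2 ∧ (p.2:ℕ) < m ∧ p.1 ≠ t ∧ p.2 ≠ t),
    (X p.1 - X p.2)

/-- vanishing on the locus of points with two coincidences among the first `m` coords. -/
def Van (N m : ℕ) (f : R N) : Prop :=
  ∀ (a : Fin N → ℂ) (i j k l : Fin N), i < j → k < l → (j:ℕ) < m → (l:ℕ) < m →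
    (i,j) ≠ (k,l) → a i = a j → a k = a l → eval a f = 0

lemma gp_van (N m : ℕ) (t : Fin N) : Van N m (gp N m t) := by
  intro a i j k l hij hkl hjm hlm hne hai hak
  obtain ⟨σ, τ, hστ, hσt, hτt, hb, hcoin, -⟩ := core t i j k l hij hkl hne
  rw [gp, map_prod]
  apply Finset.prod_eq_zero (i := (σ, τ))
  · simp only [Finset.mem_filter, Finset.mem_univ, true_and]
    exact ⟨hστ, by omega, hσt, hτt⟩
  · rw [map_sub, eval_X, eval_X, hcoin a hai hak, sub_self]

lemma gT_mem_span_pair (s i j k l : Fin N) (hij : i < j) (hkl : k < l)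
    (hne : (i,j) ≠ (k,l)) :
    (∏ p ∈ Finset.univ.filter
        (fun p : Fin N × Fin N => p.1 < p.2 ∧ p.1 ≠ s ∧ p.2 ≠ s),
      (X p.1 - X p.2)) ∈ Ideal.span {(X i - X j : R N), X k - X l} := by
  obtain ⟨σ, τ, hστ, hσs, hτs, -, -, hspan⟩ := core s i j k l hij hkl hne
  have hmem : (σ, τ) ∈ Finset.univ.filter
      (fun p : Fin N × Fin N => p.1 < p.2 ∧ p.1 ≠ s ∧ p.2 ≠ s) := by
    simp only [Finset.mem_filter, Finset.mem_univ, true_and]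
    exact ⟨hστ, hσs, hτs⟩
  obtain ⟨c, hc⟩ := Finset.dvd_prod_of_mem (fun p : Fin N × Fin N => (X p.1 - X p.2 : R N)) hmem
  rw [hc]
  exact Ideal.mul_mem_right c _ hspan

/-- indices `< m`. -/
def Tm (N m : ℕ) : Finset (Fin N) := Finset.univ.filter (fun u => (u:ℕ) < m)

lemma mem_Tm {m : ℕ} {u : Fin N} : u ∈ Tm N m ↔ (u:ℕ) < m := by
  simp [Tm]

lemma gp_succ_split (m : ℕ) (hm : m < N) (t : Fin N) (ht : (t:ℕ) < m) :
    gp N (m+1) t = gp N m t * ∏ u ∈ (Tm N m).erase t, (X u - X ⟨m, hm⟩) := by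
  classical
  rw [gp, ← Finset.prod_filter_mul_prod_filter_not
      (Finset.univ.filter
        (fun p : Fin N × Fin N => p.1 < p.2 ∧ (p.2:ℕ) < m+1 ∧ p.1 ≠ t ∧ p.2 ≠ t))
      (fun p : Fin N × Fin N => (p.2:ℕ) < m)]
  congr 1
  · rw [gp, Finset.filter_filter]
    apply Finset.prod_congr _ (fun _ _ => rfl)
    ext p
    simp only [Finset.mem_filter, Finset.mem_univ, true_and]
    constructor
    · rintro ⟨⟨h1,h2,h3,h4⟩,h5⟩; exact ⟨h1,h5,h3,h4⟩
    · rintro ⟨h1,h2,h3,h4⟩; exact ⟨⟨h1, by omega, h3, h4⟩, h2⟩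
  · apply Finset.prod_nbij' (fun p => p.1) (fun u => (u, ⟨m, hm⟩))
    · intro p hp
      simp only [Finset.filter_filter, Finset.mem_filter, Finset.mem_univ, true_and] at hp
      obtain ⟨⟨h1,h2,h3,h4⟩,h5⟩ := hp
      rw [Fin.lt_def] at h1
      rw [Finset.mem_erase, mem_Tm]
      exact ⟨h3, by omega⟩
    · intro u hu
      rw [Finset.mem_erase, mem_Tm] at hu
      simp only [Finset.filter_filter, Finset.mem_filter, Finset.mem_univ, true_and]
      refine ⟨⟨?_, by omega, hu.1, ?_⟩, by omega⟩
      · rw [Fin.lt_def]; exact hu.2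
      · intro he
        have : (t:ℕ) = m := by rw [← he]
        omega
    · intro p hp
      simp only [Finset.filter_filter, Finset.mem_filter, Finset.mem_univ, true_and] at hp
      obtain ⟨⟨h1,h2,h3,h4⟩,h5⟩ := hp
      have : p.2 = ⟨m, hm⟩ := by
        apply Fin.ext; simp only []
        omega
      rw [← this]
    · intro u hu; rfl
    · intro p hp
      simp only [Finset.filter_filter, Finset.mem_filter, Finset.mem_univ, true_and] at hp
      obtain ⟨⟨h1,h2,h3,h4⟩,h5⟩ := hp
      have : p.2 = ⟨m, hm⟩ := by apply Fin.ext; simp only []; omega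
      rw [this]

lemma delta_split (m : ℕ) (hm : m < N) (t : Fin N) (ht : (t:ℕ) < m) :
    gp N m ⟨m, hm⟩ = gp N m t *
      ∏ u ∈ (Tm N m).erase t, (if u < t then X u - X t else X t - X u) := by
  classical
  rw [gp, ← Finset.prod_filter_mul_prod_filter_not
      (Finset.univ.filter
        (fun p : Fin N × Fin N => p.1 < p.2 ∧ (p.2:ℕ) < m ∧ p.1 ≠ ⟨m, hm⟩ ∧ p.2 ≠ ⟨m, hm⟩))
      (fun p : Fin N × Fin N => p.1 ≠ t ∧ p.2 ≠ t)]
  congr 1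
  · rw [gp, Finset.filter_filter]
    apply Finset.prod_congr _ (fun _ _ => rfl)
    ext p
    simp only [Finset.mem_filter, Finset.mem_univ, true_and, ne_eq, Fin.ext_iff, Fin.lt_def]
    omega
  · apply Finset.prod_nbij' (fun p => if p.1 = t then p.2 else p.1)
      (fun u => if u < t then (u, t) else (t, u))
    · intro p hp
      simp only [Finset.filter_filter, Finset.mem_filter, Finset.mem_univ, true_and,
        not_and_or, not_ne_iff] at hp
      obtain ⟨⟨h1,h2,h3,h4⟩,h5⟩ := hp
      rw [Finset.mem_erase, mem_Tm]
      have h2' : (p.2:ℕ) < m := h2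
      have h1' : (p.1:ℕ) < (p.2:ℕ) := h1
      rcases h5 with h5 | h5
      · rw [if_pos h5]
        have ht5 : (p.1:ℕ) = (t:ℕ) := congrArg Fin.val h5
        refine ⟨fun he => ?_, by omega⟩
        have := congrArg Fin.val he; omega
      · have ht5 : (p.2:ℕ) = (t:ℕ) := congrArg Fin.val h5
        have hne : p.1 ≠ t := fun he => by
          have := congrArg Fin.val he; omega
        rw [if_neg hne]
        exact ⟨hne, by omega⟩
    · intro u hu
      rw [Finset.mem_erase, mem_Tm] at hu
      simp only [Finset.filter_filter, Finset.mem_filter, Finset.mem_univ, true_and,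
        not_and_or, not_ne_iff]
      by_cases h : u < t
      · rw [if_pos h]
        refine ⟨⟨h, ht, ?_, ?_⟩, Or.inr rfl⟩
        · intro he
          have : (u:ℕ) = m := congrArg Fin.val he
          omega
        · intro he
          have : (t:ℕ) = m := congrArg Fin.val he
          omega
      · rw [if_neg h]
        have hlt : t < u := lt_of_le_of_ne (not_lt.mp h) (Ne.symm hu.1)
        refine ⟨⟨hlt, hu.2, ?_, ?_⟩, Or.inl rfl⟩
        · intro he
          have : (t:ℕ) = m := congrArg Fin.val he
          omega
        · intro he
          have : (u:ℕ) = m := congrArg Fin.val he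
          omega
    · intro p hp
      simp only [Finset.filter_filter, Finset.mem_filter, Finset.mem_univ, true_and,
        not_and_or, not_ne_iff] at hp
      obtain ⟨⟨h1,h2,h3,h4⟩,h5⟩ := hp
      rcases h5 with h5 | h5
      · rw [if_pos h5]
        have : ¬ p.2 < t := by rw [← h5]; exact fun hh => (lt_asymm h1) hh
        rw [if_neg this, ← h5]
      · have hne : p.1 ≠ t := by
          intro he; rw [he, h5] at h1; exact lt_irrefl _ h1
        rw [if_neg hne, if_pos (h5 ▸ h1), ← h5]
    · intro u hu
      rw [Finset.mem_erase, mem_Tm] at hu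
      by_cases h : u < t
      · rw [if_pos h]; simp [hu.1]
      · rw [if_neg h]; simp
    · intro p hp
      simp only [Finset.filter_filter, Finset.mem_filter, Finset.mem_univ, true_and,
        not_and_or, not_ne_iff] at hp
      obtain ⟨⟨h1,h2,h3,h4⟩,h5⟩ := hp
      rcases h5 with h5 | h5
      · rw [if_pos h5]
        have : ¬ p.2 < t := by rw [← h5]; exact fun hh => (lt_asymm h1) hh
        rw [if_neg this, ← h5]
      · have hne : p.1 ≠ t := by
          intro he; rw [he, h5] at h1; exact lt_irrefl _ h1
        rw [if_neg hne, if_pos (h5 ▸ h1), ← h5]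

def et (t : Fin N) (S : Finset (Fin N)) : R N := ∏ u ∈ S, (if u < t then (1 : R N) else -1)

lemma wt_prod (t : Fin N) (S : Finset (Fin N)) :
    ∏ u ∈ S, (if u < t then X u - X t else X t - X u)
      = et t S * ∏ u ∈ S, (X u - X t) := by
  rw [et, ← Finset.prod_mul_distrib]
  apply Finset.prod_congr rfl
  intro u _; split <;> ring

lemma sb_idem (i j : Fin N) (h : i ≠ j) (f : R N) : sb i j (sb i j f) = sb i j f := by
  have hcomp : (sb i j).comp (sb i j) = sb i j := by
    apply MvPolynomial.algHom_ext
    intro u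
    by_cases hu : u = j
    · subst hu; simp [sb, h]
    · simp [sb, hu]
  exact DFunLike.congr_fun hcomp f

lemma sb_X_sub (i j u v : Fin N) (hu : u ≠ j) (hv : v ≠ j) :
    sb i j (X u - X v) = X u - X v := by
  rw [map_sub, sb_X_of_ne _ _ _ hu, sb_X_of_ne _ _ _ hv]

lemma sb_gp (m : ℕ) (hm : m < N) (t t' : Fin N) :
    sb t ⟨m, hm⟩ (gp N m t') = gp N m t' := by
  rw [gp, map_prod]
  apply Finset.prod_congr rfl
  intro p hp
  simp only [Finset.mem_filter, Finset.mem_univ, true_and] at hp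
  obtain ⟨h1, h2, -, -⟩ := hp
  have h1' : (p.1:ℕ) < (p.2:ℕ) := h1
  apply sb_X_sub
  · intro he; have : (p.1:ℕ) = m := congrArg Fin.val he; omega
  · intro he; have : (p.2:ℕ) = m := congrArg Fin.val he; omega

lemma sb_gp_succ_self (m : ℕ) (hm : m < N) (t : Fin N) (ht : (t:ℕ) < m) :
    sb t ⟨m, hm⟩ (gp N (m+1) t)
      = gp N m t * ∏ u ∈ (Tm N m).erase t, (X u - X t) := by
  rw [gp_succ_split m hm t ht, map_mul, sb_gp, map_prod]
  congr 1
  apply Finset.prod_congr rfl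
  intro u hu
  rw [Finset.mem_erase, mem_Tm] at hu
  rw [map_sub, sb_X_of_ne, sb_X, if_pos rfl]
  intro he; have : (u:ℕ) = m := congrArg Fin.val he; omega

lemma sb_gp_succ_other (m : ℕ) (hm : m < N) (t u : Fin N) (ht : (t:ℕ) < m)
    (hu : (u:ℕ) < m) (hut : t ≠ u) :
    sb t ⟨m, hm⟩ (gp N (m+1) u) = 0 := by
  rw [gp, map_prod]
  apply Finset.prod_eq_zero (i := ((t, ⟨m, hm⟩) : Fin N × Fin N))
  · simp only [Finset.mem_filter, Finset.mem_univ, true_and]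
    refine ⟨by rw [Fin.lt_def]; exact ht, by omega, hut, ?_⟩
    intro he; have : m = (u:ℕ) := congrArg Fin.val he; omega
  · rw [map_sub, sb_X_of_ne, sb_X, if_pos rfl, sub_self]
    intro he; have : (t:ℕ) = m := congrArg Fin.val he; omega

lemma sb_et (i j t : Fin N) (S : Finset (Fin N)) : sb i j (et t S) = et t S := by
  rw [et, map_prod]
  apply Finset.prod_congr rfl
  intro u _
  split
  · exact map_one _
  · rw [map_neg, map_one]

def gset (N m : ℕ) : Set (R N) := {g | ∃ t : Fin N, (t:ℕ) < m ∧ g = gp N m t}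

theorem main (N : ℕ) : ∀ (m : ℕ), 1 ≤ m → m ≤ N → ∀ f : R N, Van N m f →
    f ∈ Ideal.span (gset N m) := by
  intro m hm1
  induction m, hm1 using Nat.le_induction with
  | base =>
      intro hmN f _
      have h0 : (0:ℕ) < N := hmN
      have hgp1 : gp N 1 ⟨0, h0⟩ = 1 := by
        have hempty : Finset.univ.filter
            (fun p : Fin N × Fin N =>
              p.1 < p.2 ∧ (p.2:ℕ) < 1 ∧ p.1 ≠ ⟨0,h0⟩ ∧ p.2 ≠ ⟨0,h0⟩) = ∅ := by
          apply Finset.filter_eq_empty_iff.mpr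
          rintro p - ⟨hlt, h2, -, -⟩
          have : (p.1:ℕ) < (p.2:ℕ) := hlt
          omega
        rw [gp, hempty, Finset.prod_empty]
      have h1mem : (1 : R N) ∈ gset N 1 := ⟨⟨0,h0⟩, by simp, hgp1.symm⟩
      have htop : Ideal.span (gset N 1) = ⊤ :=
        (Ideal.eq_top_iff_one _).mpr (Ideal.subset_span h1mem)
      rw [htop]; trivial
  | succ m hm1 ih =>
      intro hmN f hf
      have hm : m < N := hmN
      set μ : Fin N := ⟨m, hm⟩ with hμ
      -- quotients of substituted f by the small discriminant
      have key : ∀ t : Fin N, ∃ h : R N, (t:ℕ) < m →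
          (sb t μ f = gp N m μ * h ∧ sb t μ h = h) := by
        intro t
        by_cases ht : (t:ℕ) < m
        · have htμ : t ≠ μ := by
            intro he; have : (t:ℕ) = m := congrArg Fin.val he; omega
          have hdvd : gp N m μ ∣ sb t μ f := by
            rw [gp]
            apply prod_pairs_dvd
            · intro p hp
              simp only [Finset.mem_filter, Finset.mem_univ, true_and] at hp
              exact hp.1
            · intro p hp
              simp only [Finset.mem_filter, Finset.mem_univ, true_and] at hp
              obtain ⟨h1, h2, -, -⟩ := hp
              have h1' : (p.1:ℕ) < (p.2:ℕ) := h1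
              have hp1μ : p.1 ≠ μ := by
                intro he; have : (p.1:ℕ) = m := congrArg Fin.val he; omega
              have hp2μ : p.2 ≠ μ := by
                intro he; have : (p.2:ℕ) = m := congrArg Fin.val he; omega
              apply dvd_of_vanish h1.ne
              intro a ha
              rw [eval_sb]
              refine hf _ p.1 p.2 t μ h1 (by rw [Fin.lt_def]; exact ht)
                (by omega) (Nat.lt_succ_self m) ?_ ?_ ?_
              · intro he
                have : (p.2:ℕ) = m := congrArg Fin.val (congrArg Prod.snd he)
                omega
              · rw [Function.update_of_ne hp1μ, Function.update_of_ne hp2μ]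
                exact ha
              · rw [Function.update_of_ne htμ, Function.update_self]
          obtain ⟨h0, hh0⟩ := hdvd
          refine ⟨sb t μ h0, fun _ => ⟨?_, sb_idem t μ htμ h0⟩⟩
          have hc := congrArg (sb t μ) hh0
          rwa [sb_idem t μ htμ, map_mul, sb_gp m hm t μ] at hc
        · exact ⟨0, fun hc => absurd hc ht⟩
      choose H hH using key
      set A' : R N := ∑ t ∈ Tm N m, et t ((Tm N m).erase t) * H t * gp N (m+1) t
        with hA'
      have hsbA' : ∀ t ∈ Tm N m, sb t μ A' = gp N m μ * H t := by
        intro t htm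
        have ht : (t:ℕ) < m := mem_Tm.mp htm
        have htμ : t ≠ μ := by
          intro he; have : (t:ℕ) = m := congrArg Fin.val he; omega
        rw [hA', map_sum]
        rw [Finset.sum_eq_single t]
        · rw [map_mul, map_mul, sb_et, (hH t ht).2, sb_gp_succ_self m hm t ht]
          have hdel : gp N m μ
              = gp N m t * (et t ((Tm N m).erase t)
                  * ∏ u ∈ (Tm N m).erase t, (X u - X t)) := by
            rw [delta_split m hm t ht, wt_prod]
          rw [hdel]; ring
        · intro b hb hbt
          rw [map_mul, sb_gp_succ_other m hm t b ht (mem_Tm.mp hb) (Ne.symm hbt),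
            mul_zero]
        · intro habs; exact absurd htm habs
      have hdvd2 : ∀ t ∈ Tm N m, (X t - X μ) ∣ (f - A') := by
        intro t htm
        have ht := mem_Tm.mp htm
        apply dvd_of_sb_eq_zero
        rw [map_sub, hsbA' t htm, (hH t ht).1, sub_self]
      have hπ : (∏ t ∈ Tm N m, (X t - X μ)) ∣ (f - A') := by
        have hinj : ∀ x ∈ Tm N m, ∀ y ∈ Tm N m,
            (fun t : Fin N => (t, μ)) x = (fun t : Fin N => (t, μ)) y → x = y := by
          intro x _ y _ h
          exact congrArg Prod.fst h
        have hd := prod_pairs_dvd ((Tm N m).image (fun t : Fin N => (t, μ)))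
          (by
            intro p hp
            rw [Finset.mem_image] at hp
            obtain ⟨t, htm, rfl⟩ := hp
            rw [Fin.lt_def]; exact mem_Tm.mp htm)
          (f - A')
          (by
            intro p hp
            rw [Finset.mem_image] at hp
            obtain ⟨t, htm, rfl⟩ := hp
            exact hdvd2 t htm)
        rwa [Finset.prod_image hinj] at hd
      obtain ⟨B, hB⟩ := hπ
      have hVA' : Van N (m+1) A' := by
        intro a i j k l hij hkl hjm hlm hne hai hak
        rw [hA', map_sum]
        apply Finset.sum_eq_zero
        intro t _
        rw [map_mul, gp_van N (m+1) t a i j k l hij hkl hjm hlm hne hai hak, mul_zero]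
      have hVfA' : Van N (m+1) (f - A') := by
        intro a i j k l hij hkl hjm hlm hne hai hak
        rw [map_sub, hf a i j k l hij hkl hjm hlm hne hai hak,
          hVA' a i j k l hij hkl hjm hlm hne hai hak, sub_self]
      have hVB : Van N m B := by
        intro a i j k l hij hkl hjm hlm hne hai hak
        classical
        set φ : R N →ₐ[ℂ] Polynomial ℂ :=
          aeval (fun u => if u = μ then Polynomial.X else Polynomial.C (a u)) with hφ
        have hev : ∀ (c : ℂ) (F : R N),
            Polynomial.eval c (φ F) = eval (Function.update a μ c) F := by
          intro c F
          have hhom : (Polynomial.evalRingHom c).comp (φ : R N →+* Polynomial ℂ)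
              = (eval (Function.update a μ c) : R N →+* ℂ) := by
            apply MvPolynomial.ringHom_ext
            · intro r; simp [hφ]
            · intro u
              by_cases hu : u = μ
              · subst hu; simp [hφ]
              · simp [hφ, hu, Function.update_of_ne hu]
          exact congrFun (congrArg DFunLike.coe hhom) F
        have hiμ : i ≠ μ := by
          intro he
          have h1 : (i:ℕ) < (j:ℕ) := hij
          have : (i:ℕ) = m := congrArg Fin.val he; omega
        have hjμ : j ≠ μ := by
          intro he; have : (j:ℕ) = m := congrArg Fin.val he; omega
        have hkμ : k ≠ μ := by
          intro he
          have h1 : (k:ℕ) < (l:ℕ) := hkl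
          have : (k:ℕ) = m := congrArg Fin.val he; omega
        have hlμ : l ≠ μ := by
          intro he; have : (l:ℕ) = m := congrArg Fin.val he; omega
        have hroot : ∀ c : ℂ, c ∉ (Tm N m).image a → (φ B).IsRoot c := by
          intro c hc
          have h0 : eval (Function.update a μ c) (f - A') = 0 := by
            refine hVfA' _ i j k l hij hkl (by omega) (by omega) hne ?_ ?_
            · rw [Function.update_of_ne hiμ, Function.update_of_ne hjμ]; exact hai
            · rw [Function.update_of_ne hkμ, Function.update_of_ne hlμ]; exact hak
          rw [hB, map_mul] at h0
          have hπne : eval (Function.update a μ c)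
              (∏ t ∈ Tm N m, (X t - X μ)) ≠ 0 := by
            rw [map_prod]
            apply Finset.prod_ne_zero_iff.mpr
            intro t htm
            have htμ : t ≠ μ := by
              intro he
              have : (t:ℕ) = m := congrArg Fin.val he
              have := mem_Tm.mp htm
              omega
            rw [map_sub, eval_X, eval_X, Function.update_self,
              Function.update_of_ne htμ]
            intro hzero
            apply hc
            rw [Finset.mem_image]
            exact ⟨t, htm, sub_eq_zero.mp hzero⟩
          rcases mul_eq_zero.mp h0 with hcase | hcase
          · exact absurd hcase hπne
          · rw [Polynomial.IsRoot, hev]; exact hcase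
        have hφB : φ B = 0 := by
          apply Polynomial.eq_zero_of_infinite_isRoot
          apply Set.Infinite.mono ?_
            (Set.Finite.infinite_compl (((Tm N m).image a) : Finset ℂ).finite_toSet)
          intro c hc
          exact hroot c (by simpa using hc)
        have heval : eval a B = Polynomial.eval (a μ) (φ B) := by
          rw [hev, Function.update_eq_self]
        rw [heval, hφB, Polynomial.eval_zero]
      have hBmem : B ∈ Ideal.span (gset N m) := ih (by omega) B hVB
      have hfeq : f = A' + (∏ t ∈ Tm N m, (X t - X μ)) * B := by
        rw [← hB]; ring
      rw [hfeq]
      apply Ideal.add_mem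
      · rw [hA']
        apply Ideal.sum_mem
        intro t htm
        exact Ideal.mul_mem_left _ _
          (Ideal.subset_span ⟨t, by have := mem_Tm.mp htm; omega, rfl⟩)
      · clear hfeq hB hVB
        induction hBmem using Submodule.span_induction with
        | mem x hx =>
            obtain ⟨t, ht, rfl⟩ := hx
            have hkey : (∏ u ∈ Tm N m, (X u - X μ)) * gp N m t
                = gp N (m+1) t * (X t - X μ) := by
              rw [← Finset.mul_prod_erase (Tm N m) _ (mem_Tm.mpr ht),
                gp_succ_split m hm t ht]
              ring
            rw [hkey]
            exact Ideal.mul_mem_right _ _ (Ideal.subset_span ⟨t, by omega, rfl⟩)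
        | zero => rw [mul_zero]; exact Ideal.zero_mem _
        | add x y hx hy hx' hy' => rw [mul_add]; exact Ideal.add_mem _ hx' hy'
        | smul r x hx hx' =>
            rw [smul_eq_mul, mul_left_comm]
            exact Ideal.mul_mem_left _ _ hx'

lemma X_sub_inj {i j k l : Fin N} (hij : i < j) (hkl : k < l)
    (h : (X i - X j : R N) = X k - X l) : i = k ∧ j = l := by
  classical
  have hik : i = k := by
    by_contra hik
    have he := congrArg (eval (fun u => if u = k then (1:ℂ) else 0)) h
    rw [map_sub, map_sub, eval_X, eval_X, eval_X, eval_X] at he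
    rw [if_neg hik, if_pos rfl, if_neg hkl.ne'] at he
    by_cases hjk : j = k
    · rw [if_pos hjk] at he; norm_num at he
    · rw [if_neg hjk] at he; norm_num at he
  subst hik
  exact ⟨rfl, MvPolynomial.X_injective (sub_right_inj.mp h)⟩

lemma gT_eq {n : ℕ} (s : Fin (n+1)) :
    (∏ p ∈ Finset.univ.filter
        (fun p : Fin (n+1) × Fin (n+1) => p.1 < p.2 ∧ p.1 ≠ s ∧ p.2 ≠ s),
      (X p.1 - X p.2) : R (n+1)) = gp (n+1) (n+1) s := by
  rw [gp]
  apply Finset.prod_congr _ (fun _ _ => rfl)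
  apply Finset.filter_congr
  intro p _
  exact ⟨fun ⟨a,b,c⟩ => ⟨a, p.2.is_lt, b, c⟩, fun ⟨a,_,b,c⟩ => ⟨a,b,c⟩⟩

lemma det_eq {n : ℕ} (s : Fin (n+1)) :
    Matrix.det (Matrix.of fun i j : Fin n =>
        (X (s.succAbove i) : R (n+1)) ^ (j : ℕ))
      = (-1 : R (n+1))^((Finset.univ.sigma fun i : Fin n => Finset.Ioi i).card) *
        ∏ p ∈ Finset.univ.filter
          (fun p : Fin (n+1) × Fin (n+1) => p.1 < p.2 ∧ p.1 ≠ s ∧ p.2 ≠ s),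
          (X p.1 - X p.2) := by
  classical
  have hvd : (Matrix.of fun i j : Fin n =>
      (X (s.succAbove i) : R (n+1)) ^ (j : ℕ))
      = Matrix.vandermonde (fun i => (X (s.succAbove i) : R (n+1))) := rfl
  rw [hvd, Matrix.det_vandermonde, Finset.prod_sigma']
  have hstep : ∀ x ∈ (Finset.univ.sigma fun i : Fin n => Finset.Ioi i),
      ((X (s.succAbove x.2) : R (n+1)) - X (s.succAbove x.1))
        = (-1) * (X (s.succAbove x.1) - X (s.succAbove x.2)) := by
    intro x _; ring
  rw [Finset.prod_congr rfl hstep, Finset.prod_mul_distrib, Finset.prod_const]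
  congr 1
  apply Finset.prod_bij (fun (x : Σ _ : Fin n, Fin n) _ => (s.succAbove x.1, s.succAbove x.2))
  · intro x hx
    rw [Finset.mem_sigma, Finset.mem_Ioi] at hx
    simp only [Finset.mem_filter, Finset.mem_univ, true_and]
    exact ⟨(Fin.strictMono_succAbove s) hx.2, Fin.succAbove_ne s x.1,
      Fin.succAbove_ne s x.2⟩
  · intro x hx y hy hxy
    obtain ⟨h1, h2⟩ := Prod.mk.injEq _ _ _ _ ▸ hxy
    have hinj := (Fin.strictMono_succAbove s).injective
    rcases x; rcases y
    simp only [Prod.mk.injEq] at hxy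
    exact Sigma.ext (hinj hxy.1) (by simp [hinj hxy.1, hinj hxy.2])
  · intro p hp
    simp only [Finset.mem_filter, Finset.mem_univ, true_and] at hp
    obtain ⟨hlt, h1, h2⟩ := hp
    obtain ⟨a, ha⟩ := Fin.exists_succAbove_eq h1
    obtain ⟨b, hb⟩ := Fin.exists_succAbove_eq h2
    refine ⟨⟨a, b⟩, ?_, by rw [ha, hb]⟩
    rw [Finset.mem_sigma, Finset.mem_Ioi]
    refine ⟨Finset.mem_univ _, ?_⟩
    have := hlt
    rw [← ha, ← hb] at this
    exact ((Fin.strictMono_succAbove s).lt_iff_lt).mp this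
  · intro x hx; rfl

end
end BraidAux


open MvPolynomial

/-- The singular-locus ideal of a hyperplane arrangement given by a set `A` of linear
forms: the intersection over all unordered pairs of distinct forms of the ideals
generated by the two forms (the empty intersection being the unit ideal). -/
noncomputable def singIdeal {R : Type*} [CommRing R] (A : Set R) : Ideal R :=
  ⨅ (ℓ : R) (_ : ℓ ∈ A) (ℓ' : R) (_ : ℓ' ∈ A) (_ : ℓ ≠ ℓ'), Ideal.span {ℓ, ℓ'}

theorem stmt0 (n : ℕ) (hn : 1 ≤ n)
    (A : Set (MvPolynomial (Fin (n + 1)) ℂ))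
    (hA : A = {f | ∃ i j : Fin (n + 1), i < j ∧ f = X i - X j}) :
    singIdeal A =
      Ideal.span (Set.range fun s : Fin (n + 1) =>
        ∏ p ∈ Finset.univ.filter
          (fun p : Fin (n + 1) × Fin (n + 1) => p.1 < p.2 ∧ p.1 ≠ s ∧ p.2 ≠ s),
          (X p.1 - X p.2)) ∧
    singIdeal A =
      Ideal.span (Set.range fun s : Fin (n + 1) =>
        Matrix.det (Matrix.of fun i j : Fin n =>
          (X (s.succAbove i) : MvPolynomial (Fin (n + 1)) ℂ) ^ (j : ℕ))) := by
  classical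
  have hset : (Set.range fun s : Fin (n+1) =>
      (∏ p ∈ Finset.univ.filter
        (fun p : Fin (n+1) × Fin (n+1) => p.1 < p.2 ∧ p.1 ≠ s ∧ p.2 ≠ s),
        (X p.1 - X p.2) : MvPolynomial (Fin (n+1)) ℂ))
      = BraidAux.gset (n+1) (n+1) := by
    ext x
    constructor
    · rintro ⟨s, rfl⟩
      exact ⟨s, s.is_lt, BraidAux.gT_eq s⟩
    · rintro ⟨t, ht, rfl⟩
      exact ⟨t, BraidAux.gT_eq t⟩
  have h1 : singIdeal A = Ideal.span (Set.range fun s : Fin (n+1) =>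
      (∏ p ∈ Finset.univ.filter
        (fun p : Fin (n+1) × Fin (n+1) => p.1 < p.2 ∧ p.1 ≠ s ∧ p.2 ≠ s),
        (X p.1 - X p.2) : MvPolynomial (Fin (n+1)) ℂ)) := by
    apply le_antisymm
    · intro f hf
      simp only [singIdeal, Ideal.mem_iInf] at hf
      have hV : BraidAux.Van (n+1) (n+1) f := by
        intro a i j k l hij hkl hjm hlm hne hai hak
        have hmem : f ∈ Ideal.span
            {(X i - X j : MvPolynomial (Fin (n+1)) ℂ), X k - X l} := by
          refine hf _ ?_ _ ?_ ?_
          · rw [hA]; exact ⟨i, j, hij, rfl⟩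
          · rw [hA]; exact ⟨k, l, hkl, rfl⟩
          · intro he
            obtain ⟨e1, e2⟩ := BraidAux.X_sub_inj hij hkl he
            exact hne (by rw [e1, e2])
        obtain ⟨u, v, huv⟩ := Ideal.mem_span_pair.mp hmem
        rw [← huv, map_add, map_mul, map_mul, map_sub, map_sub,
          eval_X, eval_X, eval_X, eval_X, hai, hak]
        ring
      have hmem := BraidAux.main (n+1) (n+1) (by omega) (le_refl _) f hV
      rw [← hset] at hmem
      exact hmem
    · rw [singIdeal]
      simp only [le_iInf_iff]
      intro ℓ hℓ ℓ' hℓ' hne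
      rw [Ideal.span_le]
      rintro x ⟨s, rfl⟩
      rw [hA] at hℓ hℓ'
      obtain ⟨i, j, hij, rfl⟩ := hℓ
      obtain ⟨k, l, hkl, rfl⟩ := hℓ'
      have hne' : (i, j) ≠ (k, l) := by
        intro he
        apply hne
        rw [Prod.mk.injEq] at he
        rw [he.1, he.2]
      exact BraidAux.gT_mem_span_pair s i j k l hij hkl hne'
  refine ⟨h1, ?_⟩
  rw [h1]
  set K := (Finset.univ.sigma fun i : Fin n => Finset.Ioi i).card with hK
  have he : ((-1 : MvPolynomial (Fin (n+1)) ℂ))^K * (-1)^K = 1 := by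
    rw [← mul_pow]; norm_num
  apply le_antisymm
  · rw [Ideal.span_le]
    rintro x ⟨s, rfl⟩
    beta_reduce
    have hdet := BraidAux.det_eq (n := n) s
    have hflip : (∏ p ∈ Finset.univ.filter
          (fun p : Fin (n+1) × Fin (n+1) => p.1 < p.2 ∧ p.1 ≠ s ∧ p.2 ≠ s),
          (X p.1 - X p.2) : MvPolynomial (Fin (n+1)) ℂ)
        = (-1)^K * Matrix.det (Matrix.of fun i j : Fin n =>
            (X (s.succAbove i) : MvPolynomial (Fin (n+1)) ℂ) ^ (j : ℕ)) := by
      rw [hdet, ← hK, ← mul_assoc, he, one_mul]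
    rw [hflip]
    exact Ideal.mul_mem_left _ _ (Ideal.subset_span ⟨s, rfl⟩)
  · rw [Ideal.span_le]
    rintro x ⟨s, rfl⟩
    beta_reduce
    have hdet := BraidAux.det_eq (n := n) s
    rw [← hK] at hdet
    rw [hdet]
    exact Ideal.mul_mem_left _ _ (Ideal.subset_span ⟨s, rfl⟩)
end

section
/- Let k be a field, R = k[x_0,…,x_n], let A be a finite set of nonzero, pairwise non-proportional linear forms of R, and let P be a prime ideal of R. Let A_X = {ℓ ∈ A : ℓ ∈ P}. Then the extensions of the singular-locus ideals to the localization R_P coincide: J(A)·R_P = J(A_X)·R_P. -/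
open MvPolynomial

theorem stmt15 {k : Type*} [Field k] (n : ℕ)
    (A : Set (MvPolynomial (Fin (n + 1)) k)) (hAfin : A.Finite)
    (h : ∀ ℓ ∈ A, ℓ ≠ 0 ∧ ℓ.IsHomogeneous 1)
    (hp : ∀ ℓ ∈ A, ∀ ℓ' ∈ A, ℓ ≠ ℓ' → ∀ c : k, ℓ ≠ c • ℓ')
    (P : Ideal (MvPolynomial (Fin (n + 1)) k)) [P.IsPrime] :
    Ideal.map (algebraMap (MvPolynomial (Fin (n + 1)) k) (Localization.AtPrime P))
        (singIdeal A) =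
      Ideal.map (algebraMap (MvPolynomial (Fin (n + 1)) k) (Localization.AtPrime P))
        (singIdeal {ℓ ∈ A | ℓ ∈ P}) := by
  classical
  apply le_antisymm
  · apply Ideal.map_mono
    intro x hx
    simp only [singIdeal, Ideal.mem_iInf] at hx ⊢
    intro ℓ hℓ ℓ' hℓ' hne
    exact hx ℓ hℓ.1 ℓ' hℓ'.1 hne
  · intro z hz
    rw [IsLocalization.mem_map_algebraMap_iff P.primeCompl] at hz ⊢
    obtain ⟨⟨⟨a, ha⟩, s⟩, hs⟩ := hz
    have hBfin : ({ℓ ∈ A | ℓ ∉ P} : Set (MvPolynomial (Fin (n + 1)) k)).Finite :=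
      hAfin.subset fun x hx => hx.1
    set t : MvPolynomial (Fin (n + 1)) k := ∏ ℓ ∈ hBfin.toFinset, ℓ with ht_def
    have ht : t ∈ P.primeCompl := by
      apply Submonoid.prod_mem
      intro ℓ hℓ
      rw [Set.Finite.mem_toFinset] at hℓ
      exact hℓ.2
    have hta : t * a ∈ singIdeal A := by
      simp only [singIdeal, Ideal.mem_iInf] at ha ⊢
      intro ℓ hℓ ℓ' hℓ' hne
      by_cases h1 : ℓ ∈ P
      · by_cases h2 : ℓ' ∈ P
        · exact Ideal.mul_mem_left _ t (ha ℓ ⟨hℓ, h1⟩ ℓ' ⟨hℓ', h2⟩ hne)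
        · have hdvd : ℓ' ∣ t := Finset.dvd_prod_of_mem _
            (by rw [Set.Finite.mem_toFinset]; exact ⟨hℓ', h2⟩)
          obtain ⟨c, hc⟩ := hdvd
          rw [hc, mul_assoc]
          exact Ideal.mul_mem_right _ _ (Ideal.subset_span (by simp))
      · have hdvd : ℓ ∣ t := Finset.dvd_prod_of_mem _
          (by rw [Set.Finite.mem_toFinset]; exact ⟨hℓ, h1⟩)
        obtain ⟨c, hc⟩ := hdvd
        rw [hc, mul_assoc]
        exact Ideal.mul_mem_right _ _ (Ideal.subset_span (by simp))
    refine ⟨⟨⟨t * a, hta⟩, s * ⟨t, ht⟩⟩, ?_⟩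
    simp only [Submonoid.coe_mul, map_mul] at hs ⊢
    calc z * ((algebraMap (MvPolynomial (Fin (n + 1)) k) (Localization.AtPrime P)) ↑s *
          (algebraMap (MvPolynomial (Fin (n + 1)) k) (Localization.AtPrime P)) t)
        = z * (algebraMap (MvPolynomial (Fin (n + 1)) k) (Localization.AtPrime P)) ↑s *
          (algebraMap (MvPolynomial (Fin (n + 1)) k) (Localization.AtPrime P)) t := by ring
      _ = (algebraMap (MvPolynomial (Fin (n + 1)) k) (Localization.AtPrime P)) a *
          (algebraMap (MvPolynomial (Fin (n + 1)) k) (Localization.AtPrime P)) t := by rw [hs]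
      _ = _ := by ring
end
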